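/- The standard protocol P^intent implements the knowledge-based program 𝐏 (instantiated with next(h) = |h| mod |L_in| and σ(h) = ∅) with respect to the context γ_intent(F) for each adversary model F ∈ {CR, SO}. -/

import Mathlib

open scoped Classical

noncomputable section

namespace Inter

/-- Actions available to each agent. -/
inductive Act where
  | go
  | noop
deriving DecidableEq

/-- A move through the intersection: an incoming lane paired with an outgoing lane. -/
abbrev Move (kin kout : ℕ) := Fin kin × Fin kout

/-- An adversary: a conflict-free arrival schedule, a transmission environment and
transmitter/receiver failure functions. -/
structure Adversary (kin kout : ℕ) where
  arrive : ℕ → ℕ × Fin kin × Fin kout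
  conflictFree : ∀ i j : ℕ, i ≠ j → (arrive i).1 = (arrive j).1 →
    (arrive i).2.1 ≠ (arrive j).2.1
  T : Set ((Fin kin × ℕ) × (Fin kin × ℕ))
  T_front : ∀ l l' : Fin kin, ((l, 0), (l', 0)) ∈ T
  Ft : ℕ → ℕ → Bool
  Fr : ℕ → ℕ → Bool

/-- The lane component of a sensor reading: an incoming lane, ⊥ (not yet arrived),
or ⊤ (departed). -/
inductive LaneStatus (kin : ℕ) where
  | inLane (l : Fin kin)
  | notArrived
  | finished

/-- The minimal sensor reading: front, lane and intent. -/
structure Reading (kin kout : ℕ) where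
  front : Prop
  lane : LaneStatus kin
  intent : Fin kout

/-- Environment states record the adversary, the time, a queue for each incoming lane
and the set of departed agents. -/
structure EnvState (kin kout : ℕ) where
  adv : Adversary kin kout
  time : ℕ
  queue : Fin kin → List ℕ
  done : Set ℕ

/-- Local states: a memory state together with a sensor reading
(the minimal reading plus possibly extra sensor information). -/
abbrev LState (kin kout : ℕ) (Mem Extra : Type*) := Mem × Reading kin kout × Extra

/-- Global states: an environment state and local states for all agents. -/
abbrev GState (kin kout : ℕ) (Mem Extra : Type*) :=
  EnvState kin kout × (ℕ → LState kin kout Mem Extra)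

/-- A run. -/
abbrev Run (kin kout : ℕ) (Mem Extra : Type*) := ℕ → GState kin kout Mem Extra

/-- An action protocol maps each agent's local state to an action. -/
abbrev Prot (kin kout : ℕ) (Mem Extra : Type*) := ℕ → LState kin kout Mem Extra → Act

variable {kin kout : ℕ} {Mem Extra Msg : Type*}

/-- Agent `i` is at the front of some queue. -/
def isFront (e : EnvState kin kout) (i : ℕ) : Prop :=
  ∃ l : Fin kin, (e.queue l).head? = some i

/-- The (lane, position) of agent `i`, if it is in some queue. -/
def posAt (e : EnvState kin kout) (i : ℕ) : Option (Fin kin × ℕ) :=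
  if h : ∃ l : Fin kin, i ∈ e.queue l then some (h.choose, (e.queue h.choose).idxOf i)
  else none

/-- The intended departure lane of agent `i`, as given by the arrival schedule. -/
def intentOf (e : EnvState kin kout) (i : ℕ) : Fin kout := (e.adv.arrive i).2.2

/-- The move `(lane_i, intent_i)` of agent `i`, if it is in some queue. -/
def moveAt (e : EnvState kin kout) (i : ℕ) : Option (Move kin kout) :=
  (posAt e i).map (fun p => (p.1, intentOf e i))

/-- The minimal sensor reading of agent `i` in environment state `e`. -/
def minimalReading (e : EnvState kin kout) (i : ℕ) : Reading kin kout where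
  front := isFront e i
  lane :=
    if h : ∃ l : Fin kin, i ∈ e.queue l then LaneStatus.inLane h.choose
    else if i ∈ e.done then LaneStatus.finished else LaneStatus.notArrived
  intent := intentOf e i

/-- An information-exchange protocol: initial memories, extra sensor information,
a message function and a memory-update function. -/
structure IEP (kin kout : ℕ) (Mem Extra Msg : Type*) where
  initMem : ℕ → Mem
  extra : EnvState kin kout → ℕ → Extra
  msg : ℕ → LState kin kout Mem Extra → Act → Reading kin kout × Extra → Option Msg
  upd : ℕ → LState kin kout Mem Extra → Act → Set Msg → Mem

/-- One round of the system: agents act, queues are updated (dequeues for agents that go,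
enqueues for new arrivals), new sensor readings are taken, messages are broadcast and
received subject to the transmission environment and the failure functions, and memories
are updated. -/
def step (E : IEP kin kout Mem Extra Msg) (P : Prot kin kout Mem Extra)
    (g : GState kin kout Mem Extra) : GState kin kout Mem Extra :=
  let e := g.1
  let act : ℕ → Act := fun i => P i (g.2 i)
  let q' : Fin kin → List ℕ := fun l =>
    let q1 := match (e.queue l).head? with
      | some i => if act i = Act.go then (e.queue l).tail else e.queue l
      | none => e.queue l
    if h : ∃ i l', e.adv.arrive i = (e.time + 1, l, l') then q1 ++ [h.choose] else q1
  let done' : Set ℕ := e.done ∪ {i | isFront e i ∧ act i = Act.go}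
  let e' : EnvState kin kout := ⟨e.adv, e.time + 1, q', done'⟩
  let sens : ℕ → Reading kin kout × Extra := fun i => (minimalReading e' i, E.extra e' i)
  let rcv : ℕ → Set Msg := fun i =>
    if e.adv.Fr e.time i = true ∧ (posAt e' i).isSome = true then
      {m | ∃ j pj pi, E.msg j (g.2 j) (act j) (sens j) = some m ∧
            e.adv.Ft e.time j = true ∧
            posAt e' j = some pj ∧ posAt e' i = some pi ∧ (pj, pi) ∈ e.adv.T}
    else ∅
  (e', fun i => (E.upd i (g.2 i) (act i) (rcv i), sens i))

/-- An intersection context: an information-exchange protocol together with an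
adversary model. -/
structure Ctx (kin kout : ℕ) (Mem Extra Msg : Type*) where
  iep : IEP kin kout Mem Extra Msg
  adv : Set (Adversary kin kout)

/-- Initial global states: time 0, empty queues, no departed agents, an adversary
from the adversary model, and initial local states. -/
def Init (C : Ctx kin kout Mem Extra Msg) (g : GState kin kout Mem Extra) : Prop :=
  g.1.adv ∈ C.adv ∧ g.1.time = 0 ∧ (∀ l, g.1.queue l = []) ∧ g.1.done = ∅ ∧
  ∀ i, g.2 i = (C.iep.initMem i, minimalReading g.1 i, C.iep.extra g.1 i)

/-- The interpreted system `I_{γ,P}`: the set of runs of protocol `P` in context `γ`. -/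
def Runs (C : Ctx kin kout Mem Extra Msg) (P : Prot kin kout Mem Extra) :
    Set (Run kin kout Mem Extra) :=
  {r | Init C (r 0) ∧ ∀ m, r (m + 1) = step C.iep P (r m)}

/-- `front_i` holds at the point `(r,m)`. -/
def frontAt (r : Run kin kout Mem Extra) (m i : ℕ) : Prop := isFront (r m).1 i

/-- `going_i` abbreviates `front_i ∧ ◯¬front_i`. -/
def goingAt (r : Run kin kout Mem Extra) (m i : ℕ) : Prop :=
  frontAt r m i ∧ ¬ frontAt r (m + 1) i

/-- `GO(r,m)`: the set of agents that go through the intersection in round `m+1`. -/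
def GOs (r : Run kin kout Mem Extra) (m : ℕ) : Set ℕ := {i | goingAt r m i}

/-- Validity: an agent goes through the intersection only from the front of its queue. -/
def ValidityP (C : Ctx kin kout Mem Extra Msg) (P : Prot kin kout Mem Extra) : Prop :=
  ∀ r ∈ Runs C P, ∀ m i, goingAt r m i → frontAt r m i

/-- Safety: agents that go simultaneously have compatible moves. -/
def SafetyP (O : Move kin kout → Move kin kout → Prop)
    (C : Ctx kin kout Mem Extra Msg) (P : Prot kin kout Mem Extra) : Prop :=
  ∀ r ∈ Runs C P, ∀ m i j, i ≠ j → goingAt r m i → goingAt r m j →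
    ∀ mi mj, moveAt (r m).1 i = some mi → moveAt (r m).1 j = some mj → O mi mj

/-- Liveness: every agent at the front of a queue eventually goes. -/
def LivenessP (C : Ctx kin kout Mem Extra Msg) (P : Prot kin kout Mem Extra) : Prop :=
  ∀ r ∈ Runs C P, ∀ m i, frontAt r m i → ∃ m' ≥ m, goingAt r m' i

/-- An intersection protocol: an action protocol satisfying Validity, Safety and Liveness. -/
def IsIntersectionProtocol (O : Move kin kout → Move kin kout → Prop)
    (C : Ctx kin kout Mem Extra Msg) (P : Prot kin kout Mem Extra) : Prop :=
  ValidityP C P ∧ SafetyP O C P ∧ LivenessP C P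

/-- `safe-to-go_i` at `(r,m)`: `i` is at the front of its queue (position 0) and the moves
of the agents in `GO(r,m) ∪ {i}` are pairwise compatible. -/
def safeToGo (O : Move kin kout → Move kin kout → Prop)
    (r : Run kin kout Mem Extra) (m i : ℕ) : Prop :=
  (∃ p, posAt (r m).1 i = some p ∧ p.2 = 0) ∧
  ∀ j ∈ GOs r m ∪ {i}, ∀ k ∈ GOs r m ∪ {i}, j ≠ k →
    ∀ mj mk, moveAt (r m).1 j = some mj → moveAt (r m).1 k = some mk → O mj mk

/-- `P` has unnecessary waiting with respect to `γ`. -/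
def UnnecessaryWaiting (O : Move kin kout → Move kin kout → Prop)
    (C : Ctx kin kout Mem Extra Msg) (P : Prot kin kout Mem Extra) : Prop :=
  ∃ r ∈ Runs C P, ∃ m i, safeToGo O r m i ∧ i ∉ GOs r m

/-- The time at which agent `i` goes through the intersection in run `r` (∞ if never). -/
def gotime (r : Run kin kout Mem Extra) (i : ℕ) : ℕ∞ :=
  sInf {n : ℕ∞ | ∃ m : ℕ, goingAt r m i ∧ n = (m : ℕ∞)}

/-- `P` dominates `P'`: on all corresponding runs, every agent goes at least as early. -/
def Dominates (C : Ctx kin kout Mem Extra Msg) (P P' : Prot kin kout Mem Extra) : Prop :=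
  ∀ r ∈ Runs C P, ∀ r' ∈ Runs C P', r 0 = r' 0 → ∀ i, gotime r i ≤ gotime r' i

def StrictDominates (C : Ctx kin kout Mem Extra Msg) (P P' : Prot kin kout Mem Extra) : Prop :=
  Dominates C P P' ∧ ¬ Dominates C P' P

/-- `P` is optimal: no intersection protocol strictly dominates it. -/
def Optimal (O : Move kin kout → Move kin kout → Prop)
    (C : Ctx kin kout Mem Extra Msg) (P : Prot kin kout Mem Extra) : Prop :=
  ¬ ∃ P' : Prot kin kout Mem Extra,
      IsIntersectionProtocol O C P' ∧ StrictDominates C P' P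

/-- `P` lexicographically dominates `P'`. -/
def LexDominates (C : Ctx kin kout Mem Extra Msg) (P P' : Prot kin kout Mem Extra) : Prop :=
  ∀ r ∈ Runs C P, ∀ r' ∈ Runs C P', r 0 = r' 0 →
    (∀ m, GOs r m = GOs r' m) ∨
    ∃ m, (∀ k < m, GOs r k = GOs r' k) ∧ GOs r m ≠ GOs r' m ∧ GOs r' m ⊂ GOs r m

def StrictLexDominates (C : Ctx kin kout Mem Extra Msg) (P P' : Prot kin kout Mem Extra) :
    Prop :=
  LexDominates C P P' ∧ ¬ LexDominates C P' P

/-- `P` is lexicographically optimal: no intersection protocol strictly lexicographically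
dominates it. -/
def LexOptimal (O : Move kin kout → Move kin kout → Prop)
    (C : Ctx kin kout Mem Extra Msg) (P : Prot kin kout Mem Extra) : Prop :=
  ¬ ∃ P' : Prot kin kout Mem Extra,
      IsIntersectionProtocol O C P' ∧ StrictLexDominates C P' P

/-- Knowledge: `K_i φ` holds at `(r,m)` iff `φ` holds at all points of the system where
agent `i` has the same local state. -/
def Kn (S : Set (Run kin kout Mem Extra)) (i : ℕ)
    (φ : Run kin kout Mem Extra → ℕ → Prop) (r : Run kin kout Mem Extra) (m : ℕ) : Prop :=
  ∀ r' ∈ S, ∀ m', (r' m').2 i = (r m).2 i → φ r' m'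

/-- The adversary model has no failures. -/
def NoFailures (C : Ctx kin kout Mem Extra Msg) : Prop :=
  ∀ α ∈ C.adv, ∀ k i, α.Ft k i = true ∧ α.Fr k i = true

/-- Full information exchange: every agent broadcasts (an injective encoding of) its
entire local state in every round, and records every broadcast it receives. -/
def FullInfo (C : Ctx kin kout Mem Extra Msg) : Prop :=
  (∃ enc : LState kin kout Mem Extra → Msg, Function.Injective enc ∧
      ∀ i s a o, C.iep.msg i s a o = some (enc s)) ∧
  (∀ i s a, Function.Injective fun B : Set Msg => C.iep.upd i s a B)

/-- A sufficiently rich context: every agent that will be at the front of some lane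
broadcasts a message encoding its lane and intent, tagged as coming from the front;
no other message is tagged as a front message; and each agent records the
(lane, intent) pair of each front agent it hears from. -/
def SufficientlyRich (C : Ctx kin kout Mem Extra Msg) : Prop :=
  ∃ dec : Msg → Option (Move kin kout),
    (∀ i s a (o : Reading kin kout × Extra) (l : Fin kin),
        o.1.front → o.1.lane = LaneStatus.inLane l →
        ∃ msg, C.iep.msg i s a o = some msg ∧ dec msg = some (l, o.1.intent)) ∧
    (∀ i s a (o : Reading kin kout × Extra), ¬ o.1.front →
        ∀ msg, C.iep.msg i s a o = some msg → dec msg = none) ∧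
    (∃ rec : Mem → Set (Move kin kout),
        ∀ i s a B, rec (C.iep.upd i s a B) = {mv | ∃ msg ∈ B, dec msg = some mv})

/-- The set of agents at the front of a queue. -/
def FrontSet (e : EnvState kin kout) : Set ℕ := {i | isFront e i}

/-- `P` depends only on the agents at the front of their queues. -/
def DependsOnlyOnFront (C : Ctx kin kout Mem Extra Msg) (P : Prot kin kout Mem Extra) :
    Prop :=
  ∀ r ∈ Runs C P, ∀ r' ∈ Runs C P, ∀ m m' i,
    FrontSet (r m).1 = FrontSet (r' m').1 → P i ((r m).2 i) = P i ((r' m').2 i)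

/-- The choices of an adversary in a single round: arrivals, the transmission
environment and the failure values. -/
structure Choice (kin kout : ℕ) where
  arrivals : Set (ℕ × Fin kin × Fin kout)
  T : Set ((Fin kin × ℕ) × (Fin kin × ℕ))
  Ft : ℕ → Bool
  Fr : ℕ → Bool

/-- The choices of adversary `α` in round `m+1`. -/
def choiceAt (α : Adversary kin kout) (m : ℕ) : Choice kin kout where
  arrivals := {p | α.arrive p.1 = (m + 1, p.2.1, p.2.2)}
  T := α.T
  Ft := fun i => α.Ft m i
  Fr := fun i => α.Fr m i

/-- The adversary history `H(α,m) = ⟨α_0, …, α_{m-1}⟩`. -/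
def hist (α : Adversary kin kout) (m : ℕ) : List (Choice kin kout) :=
  (List.range m).map (choiceAt α)

/-- The adversary history of run `r` up to time `m`. -/
def histOf (r : Run kin kout Mem Extra) (m : ℕ) : List (Choice kin kout) :=
  hist (r 0).1.adv m

/-- An intersection policy: a map from adversary histories to sets of permitted moves. -/
abbrev Policy (kin kout : ℕ) := List (Choice kin kout) → Set (Move kin kout)

/-- The set `H_γ` of adversary histories of the context. -/
def Hists (C : Ctx kin kout Mem Extra Msg) : Set (List (Choice kin kout)) :=
  {h | ∃ α ∈ C.adv, ∃ m, h = hist α m}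

/-- A feasible infinite sequence of histories: one arising from a single adversary. -/
def Feasible (F : Set (Adversary kin kout)) (h : ℕ → List (Choice kin kout)) : Prop :=
  ∃ α ∈ F, ∀ m, h m = hist α m

/-- Conflict-freedom of an intersection policy. -/
def ConflictFree (O : Move kin kout → Move kin kout → Prop)
    (C : Ctx kin kout Mem Extra Msg) (σ : Policy kin kout) : Prop :=
  ∀ h ∈ Hists C, ∀ mv ∈ σ h, ∀ mv' ∈ σ h, mv ≠ mv' → O mv mv'

/-- Fairness of an intersection policy. -/
def FairPolicy (C : Ctx kin kout Mem Extra Msg) (σ : Policy kin kout) : Prop :=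
  ∀ h : ℕ → List (Choice kin kout), Feasible C.adv h →
    ∀ mv : Move kin kout, ∀ m, ∃ m' ≥ m, mv ∈ σ (h m')

/-- A correct intersection policy: conflict-free and fair. -/
def CorrectPolicy (O : Move kin kout → Move kin kout → Prop)
    (C : Ctx kin kout Mem Extra Msg) (σ : Policy kin kout) : Prop :=
  ConflictFree O C σ ∧ FairPolicy C σ

/-- A synchronous context: the time is encoded in each agent's local state. -/
def Synchronous (C : Ctx kin kout Mem Extra Msg) : Prop :=
  ∃ clock : LState kin kout Mem Extra → ℕ,
    ∀ P : Prot kin kout Mem Extra, ∀ r ∈ Runs C P, ∀ m i, clock ((r m).2 i) = m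

/-- The knowledge condition of the knowledge-based program `P^σ`:
`front_i ∧ (lane_i, intent_i) ∈ σ`. -/
def phiSigma (σ : Policy kin kout) (i : ℕ) (r : Run kin kout Mem Extra) (m : ℕ) : Prop :=
  frontAt r m i ∧ ∃ mv, moveAt (r m).1 i = some mv ∧ mv ∈ σ (histOf r m)

/-- `P` implements the knowledge-based program `if K_i φ_i then go else noop` in `γ`. -/
def Implements (C : Ctx kin kout Mem Extra Msg) (P : Prot kin kout Mem Extra)
    (φ : ℕ → Run kin kout Mem Extra → ℕ → Prop) : Prop :=
  ∀ r ∈ Runs C P, ∀ m i, (P i ((r m).2 i) = Act.go ↔ Kn (Runs C P) i (φ i) r m)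

/-- Behavioral equivalence: the protocols take the same actions at all reachable states. -/
def BehEq (C : Ctx kin kout Mem Extra Msg) (P P' : Prot kin kout Mem Extra) : Prop :=
  (∀ r ∈ Runs C P, ∀ m i, P i ((r m).2 i) = P' i ((r m).2 i)) ∧
  (∀ r ∈ Runs C P', ∀ m i, P i ((r m).2 i) = P' i ((r m).2 i))

/-- `γ` is `σ`-aware. -/
def SigmaAware (C : Ctx kin kout Mem Extra Msg) (σ : Policy kin kout) : Prop :=
  ∀ P : Prot kin kout Mem Extra, ∀ r ∈ Runs C P, ∀ m i (l : Fin kin) (l' : Fin kout),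
    (l, l') ∈ σ (histOf r m) → i ∈ (r m).1.queue l →
    Kn (Runs C P) i (fun r' m' => (l, l') ∈ σ (histOf r' m')) r m

/-- `γ` is `next`-aware. -/
def NextAware (C : Ctx kin kout Mem Extra Msg)
    (next : List (Choice kin kout) → Fin kin) : Prop :=
  ∀ P : Prot kin kout Mem Extra, ∀ r ∈ Runs C P, ∀ m i (l : Fin kin),
    next (histOf r m) = l →
    Kn (Runs C P) i (fun r' m' => next (histOf r' m') = l) r m

/-- Cyclic distance from `a` to `b` (mod `kin`). -/
def distC (a b : Fin kin) : ℕ := (b.val + kin - a.val) % kin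

/-- `l` lies in the cyclic interval `[a, b)` of incoming lanes. -/
def inCyc (a b l : Fin kin) : Prop := distC a l < distC a b

/-- `mv` is compatible with every move in `S`. -/
def compatAll (O : Move kin kout → Move kin kout → Prop)
    (S : Set (Move kin kout)) (mv : Move kin kout) : Prop :=
  ∀ mv' ∈ S, O mv mv'

/-- The proposition `V_i` of the knowledge-based program `𝐏`. -/
def Vprop (O : Move kin kout → Move kin kout → Prop) (σ : Policy kin kout)
    (next : List (Choice kin kout) → Fin kin) (i : ℕ)
    (r : Run kin kout Mem Extra) (m : ℕ) : Prop :=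
  ∃ mv, moveAt (r m).1 i = some mv ∧ mv ∉ σ (histOf r m) ∧
    (∀ j mj, goingAt r m j → moveAt (r m).1 j = some mj →
        mj ∈ σ (histOf r m) → O mv mj) ∧
    (∀ j mj, j ≠ i → goingAt r m j → moveAt (r m).1 j = some mj →
        mj ∉ σ (histOf r m) → inCyc (next (histOf r m)) mv.1 mj.1 → O mv mj)

/-- The knowledge condition of the knowledge-based program `𝐏`:
`front_i ∧ ((lane_i, intent_i) ∈ σ ∨ V_i)`. -/
def phiP (O : Move kin kout → Move kin kout → Prop) (σ : Policy kin kout)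
    (next : List (Choice kin kout) → Fin kin) (i : ℕ)
    (r : Run kin kout Mem Extra) (m : ℕ) : Prop :=
  frontAt r m i ∧
    ((∃ mv, moveAt (r m).1 i = some mv ∧ mv ∈ σ (histOf r m)) ∨ Vprop O σ next i r m)

/-- Fairness of a `next` function. -/
def FairNext (C : Ctx kin kout Mem Extra Msg)
    (next : List (Choice kin kout) → Fin kin) : Prop :=
  ∀ h : ℕ → List (Choice kin kout), Feasible C.adv h →
    ∀ m (l : Fin kin), ∃ m' ≥ m, next (h m') = l

/-- Fairness of a pair `(σ, next)`. -/
def PairFair (O : Move kin kout → Move kin kout → Prop)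
    (C : Ctx kin kout Mem Extra Msg) (σ : Policy kin kout)
    (next : List (Choice kin kout) → Fin kin) : Prop :=
  ∀ h : ℕ → List (Choice kin kout), Feasible C.adv h →
    ∀ m (mv : Move kin kout), ∃ m' ≥ m,
      mv ∈ σ (h m') ∨ (next (h m') = mv.1 ∧ compatAll O (σ (h m')) mv)

/-- `next(h) = |h| mod |L_in|` at time `t`. -/
def nextL (hkin : 0 < kin) (t : ℕ) : Fin kin := ⟨t % kin, Nat.mod_lt _ hkin⟩

/-- The stages of the construction of the set `Pos_i`, starting from the lane `nxt` and
proceeding in cyclic order; `M` is the set of moves received from front agents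
(empty when there is no communication). -/
def posStage (hkin : 0 < kin) (O : Move kin kout → Move kin kout → Prop)
    (M : Set (Move kin kout)) (nxt : Fin kin) : ℕ → Set (Move kin kout)
  | 0 => ∅
  | t + 1 =>
    let S := posStage hkin O M nxt t
    let l : Fin kin := ⟨(nxt.val + t) % kin, Nat.mod_lt _ hkin⟩
    if ∃ l' : Fin kout, (l, l') ∈ M then
      S ∪ {mv | mv.1 = l ∧ mv ∈ M ∧ compatAll O S mv}
    else
      S ∪ {mv | mv.1 = l ∧ compatAll O S mv}

/-- The set `Pos_i` computed from the received moves `M`, the lane `nxt = next` and the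
agent's own lane `lanei`. -/
def PosSet (hkin : 0 < kin) (O : Move kin kout → Move kin kout → Prop)
    (M : Set (Move kin kout)) (nxt lanei : Fin kin) : Set (Move kin kout) :=
  posStage hkin O M nxt (distC nxt lanei)

/-- The stage `Pos_i^l` of the construction of `Pos_i`, for a lane `l` in the cyclic
interval `[nxt, lane_i)`. -/
def PosUpTo (hkin : 0 < kin) (O : Move kin kout → Move kin kout → Prop)
    (M : Set (Move kin kout)) (nxt l : Fin kin) : Set (Move kin kout) :=
  posStage hkin O M nxt (distC nxt l + 1)

/-- The adversary model with no failures. -/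
def NFadv (kin kout : ℕ) : Set (Adversary kin kout) :=
  {α | ∀ k i, α.Ft k i = true ∧ α.Fr k i = true}

/-- The adversary model with crash failures. -/
def CRadv (kin kout : ℕ) : Set (Adversary kin kout) :=
  {α | (∀ k i, α.Fr k i = true) ∧
    ∀ k i, α.Ft k i = false → ∀ k', k < k' → α.Ft k' i = false}

/-- The adversary model with sending omissions. -/
def SOadv (kin kout : ℕ) : Set (Adversary kin kout) :=
  {α | ∀ k i, α.Fr k i = true}

/-- The information-exchange protocol of `γ_∅`: a single memory state, no messages,
and sensor readings `⟨front_i, lane_i, intent_i, time_i⟩`. -/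
def E0 (kin kout : ℕ) : IEP kin kout Unit ℕ Empty where
  initMem _ := ()
  extra e _ := e.time
  msg _ _ _ _ := none
  upd _ _ _ _ := ()

/-- The context `γ_∅(F)`. -/
def gammaEmpty (kin kout : ℕ) (F : Set (Adversary kin kout)) : Ctx kin kout Unit ℕ Empty :=
  ⟨E0 kin kout, F⟩

/-- The protocol `P^∅`: go iff at the front and own move compatible with `Pos_i`. -/
def Pempty (hkin : 0 < kin) (O : Move kin kout → Move kin kout → Prop) :
    Prot kin kout Unit ℕ := fun _ s =>
  match s.2.1.lane with
  | LaneStatus.inLane l =>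
      if s.2.1.front ∧ compatAll O (PosSet hkin O ∅ (nextL hkin s.2.2) l) (l, s.2.1.intent)
      then Act.go else Act.noop
  | _ => Act.noop

/-- The information-exchange protocol of `γ_intent`: exactly the agents at the front of a
lane broadcast `(lane_i, intent_i)`; the memory is the set of moves received in the
current round; sensor readings are `⟨front_i, lane_i, intent_i, time_i⟩`. -/
def Eintent (kin kout : ℕ) : IEP kin kout (Set (Move kin kout)) ℕ (Move kin kout) where
  initMem _ := ∅
  extra e _ := e.time
  msg _ _ _ o :=
    if o.1.front then
      match o.1.lane with
      | LaneStatus.inLane l => some (l, o.1.intent)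
      | _ => none
    else none
  upd _ _ _ B := B

/-- The context `γ_intent(F)`. -/
def gammaIntent (kin kout : ℕ) (F : Set (Adversary kin kout)) :
    Ctx kin kout (Set (Move kin kout)) ℕ (Move kin kout) :=
  ⟨Eintent kin kout, F⟩

/-- The protocol `P^intent`: go iff at the front and own move compatible with `Pos_i`
computed from the received moves. -/
def Pintent (hkin : 0 < kin) (O : Move kin kout → Move kin kout → Prop) :
    Prot kin kout (Set (Move kin kout)) ℕ := fun _ s =>
  match s.2.1.lane with
  | LaneStatus.inLane l =>
      if s.2.1.front ∧
          compatAll O (PosSet hkin O s.1 (nextL hkin s.2.2) l) (l, s.2.1.intent)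
      then Act.go else Act.noop
  | _ => Act.noop

namespace Aux

variable {kin kout : ℕ}

theorem distC_lt (hkin : 0 < kin) (a b : Fin kin) : distC a b < kin :=
  Nat.mod_lt _ hkin

theorem lane_at_distC (a b : Fin kin) : (a.val + distC a b) % kin = b.val := by
  have ha := a.isLt; have hb := b.isLt
  unfold distC
  have h2 : a.val + (b.val + kin - a.val) = b.val + kin := by omega
  calc (a.val + (b.val + kin - a.val) % kin) % kin
      = (a.val + (b.val + kin - a.val)) % kin := Nat.add_mod_mod _ _ _
    _ = b.val := by rw [h2, Nat.add_mod_right, Nat.mod_eq_of_lt hb]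

theorem distC_lane_at (a : Fin kin) (t : ℕ) (ht : t < kin) (h : 0 < kin) :
    distC a ⟨(a.val + t) % kin, Nat.mod_lt _ h⟩ = t := by
  have ha := a.isLt
  unfold distC
  simp only
  rcases Nat.lt_or_ge (a.val + t) kin with hc | hc
  · rw [Nat.mod_eq_of_lt hc]
    have : a.val + t + kin - a.val = t + kin := by omega
    rw [this, Nat.add_mod_right, Nat.mod_eq_of_lt ht]
  · have h2 : (a.val + t) % kin = a.val + t - kin := by
      rw [Nat.mod_eq_sub_mod hc, Nat.mod_eq_of_lt (by omega)]
    rw [h2]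
    have : a.val + t - kin + kin - a.val = t := by omega
    rw [this, Nat.mod_eq_of_lt ht]

theorem posStage_mono (hkin : 0 < kin) (O : Move kin kout → Move kin kout → Prop)
    (M : Set (Move kin kout)) (nxt : Fin kin) {s t : ℕ} (h : s ≤ t) :
    posStage hkin O M nxt s ⊆ posStage hkin O M nxt t := by
  induction t with
  | zero => simpa [Nat.le_zero.mp h] using Set.Subset.rfl
  | succ n ih =>
    rcases Nat.lt_or_ge s (n+1) with hs | hs
    · refine (ih (by omega)).trans ?_
      intro mv hmv
      simp only [posStage]
      split <;> exact Set.mem_union_left _ hmv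
    · have : s = n + 1 := by omega
      subst this; exact Set.Subset.rfl

theorem posStage_elem (hkin : 0 < kin) (O : Move kin kout → Move kin kout → Prop)
    (M : Set (Move kin kout)) (nxt : Fin kin) {n : ℕ} {mv : Move kin kout}
    (h : mv ∈ posStage hkin O M nxt n) :
    ∃ t < n, mv.1.val = (nxt.val + t) % kin ∧ compatAll O (posStage hkin O M nxt t) mv ∧
      ((∃ e, (mv.1, e) ∈ M) → mv ∈ M) := by
  induction n with
  | zero => simp [posStage] at h
  | succ n ih =>
    simp only [posStage] at h
    split at h
    · rcases h with h | h
      · obtain ⟨t, ht, h1, h2, h3⟩ := ih h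
        exact ⟨t, by omega, h1, h2, h3⟩
      · obtain ⟨h1, h2, h3⟩ := h
        exact ⟨n, by omega, by rw [h1], h3, fun _ => h2⟩
    · rename_i hno
      rcases h with h | h
      · obtain ⟨t, ht, h1, h2, h3⟩ := ih h
        exact ⟨t, by omega, h1, h2, h3⟩
      · obtain ⟨h1, h2⟩ := h
        refine ⟨n, by omega, by rw [h1], h2, fun hex => absurd ?_ hno⟩
        obtain ⟨e, he⟩ := hex
        exact ⟨e, by rwa [h1] at he⟩

theorem posStage_insert (hkin : 0 < kin) (O : Move kin kout → Move kin kout → Prop)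
    (M : Set (Move kin kout)) (nxt : Fin kin) {t : ℕ} {mv : Move kin kout}
    (h1 : mv.1.val = (nxt.val + t) % kin)
    (h2 : compatAll O (posStage hkin O M nxt t) mv)
    (h3 : (∃ e, (mv.1, e) ∈ M) → mv ∈ M) :
    mv ∈ posStage hkin O M nxt (t + 1) := by
  have hlane : (⟨(nxt.val + t) % kin, Nat.mod_lt _ hkin⟩ : Fin kin) = mv.1 := by
    exact Fin.ext h1.symm
  simp only [posStage]
  split
  · rename_i hex
    refine Set.mem_union_right _ ⟨hlane.symm ▸ rfl, h3 ?_, h2⟩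
    obtain ⟨e, he⟩ := hex
    exact ⟨e, by rwa [hlane] at he⟩
  · exact Set.mem_union_right _ ⟨hlane.symm ▸ rfl, h2⟩

section Runs

variable {Mem Extra Msg : Type*}

theorem env_step (E : IEP kin kout Mem Extra Msg) (P : Prot kin kout Mem Extra)
    (g : GState kin kout Mem Extra) :
    (step E P g).1.adv = g.1.adv ∧ (step E P g).1.time = g.1.time + 1 := ⟨rfl, rfl⟩

theorem queue_step (E : IEP kin kout Mem Extra Msg) (P : Prot kin kout Mem Extra)
    (g : GState kin kout Mem Extra) (l : Fin kin) :
    (step E P g).1.queue l =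
      (let q1 := match (g.1.queue l).head? with
        | some i => if P i (g.2 i) = Act.go then (g.1.queue l).tail else g.1.queue l
        | none => g.1.queue l;
       if h : ∃ i l', g.1.adv.arrive i = (g.1.time + 1, l, l') then q1 ++ [h.choose]
       else q1) := rfl

theorem time_eq {C : Ctx kin kout Mem Extra Msg} {P : Prot kin kout Mem Extra}
    {r : Run kin kout Mem Extra} (hr : r ∈ Runs C P) : ∀ m, (r m).1.time = m := by
  intro m
  induction m with
  | zero => exact hr.1.2.1
  | succ n ih => rw [hr.2 n, (env_step _ _ _).2, ih]

theorem adv_eq {C : Ctx kin kout Mem Extra Msg} {P : Prot kin kout Mem Extra}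
    {r : Run kin kout Mem Extra} (hr : r ∈ Runs C P) : ∀ m, (r m).1.adv = (r 0).1.adv := by
  intro m
  induction m with
  | zero => rfl
  | succ n ih => rw [hr.2 n, (env_step _ _ _).1, ih]

theorem hist_length (α : Adversary kin kout) (m : ℕ) : (hist α m).length = m := by
  simp [hist]

/-- The run invariant. -/
def Inv (e : EnvState kin kout) : Prop :=
  (∀ i l, i ∈ e.queue l →
    (e.adv.arrive i).2.1 = l ∧ 1 ≤ (e.adv.arrive i).1 ∧ (e.adv.arrive i).1 ≤ e.time) ∧
  (∀ l, (e.queue l).Nodup)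

theorem mem_queue_step {E : IEP kin kout Mem Extra Msg} {P : Prot kin kout Mem Extra}
    {g : GState kin kout Mem Extra} {l : Fin kin} {i : ℕ}
    (h : i ∈ (step E P g).1.queue l) :
    i ∈ g.1.queue l ∨ g.1.adv.arrive i = (g.1.time + 1, l, (g.1.adv.arrive i).2.2) := by
  rw [queue_step] at h
  simp only at h
  have htail : ∀ (q1 : List ℕ), (q1 = (g.1.queue l).tail ∨ q1 = g.1.queue l) → i ∈ q1 →
      i ∈ g.1.queue l := by
    rintro q1 (rfl | rfl) hm
    · exact List.mem_of_mem_tail hm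
    · exact hm
  have hq1 : (match (g.1.queue l).head? with
        | some i => if P i (g.2 i) = Act.go then (g.1.queue l).tail else g.1.queue l
        | none => g.1.queue l) = (g.1.queue l).tail ∨
      (match (g.1.queue l).head? with
        | some i => if P i (g.2 i) = Act.go then (g.1.queue l).tail else g.1.queue l
        | none => g.1.queue l) = g.1.queue l := by
    rcases hh : (g.1.queue l).head? with _ | j
    · simp
    · simp only; split <;> simp
  split at h
  · rename_i hex
    rcases List.mem_append.mp h with h | h
    · exact Or.inl (htail _ hq1 h)
    · right
      have hc := hex.choose_spec
      obtain ⟨l', hc⟩ := hc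
      have : i = hex.choose := by simpa using h
      subst this
      rw [hc]
  · exact Or.inl (htail _ hq1 h)

theorem Inv_init {C : Ctx kin kout Mem Extra Msg} {P : Prot kin kout Mem Extra}
    {r : Run kin kout Mem Extra} (hr : r ∈ Runs C P) : ∀ m, Inv (r m).1 := by
  intro m
  induction m with
  | zero =>
    constructor
    · intro i l hm; rw [hr.1.2.2.1 l] at hm; simp at hm
    · intro l; rw [hr.1.2.2.1 l]; exact List.nodup_nil
  | succ n ih =>
    have ht := time_eq hr n
    constructor
    · intro i l hm
      rw [hr.2 n] at hm
      rcases mem_queue_step hm with h | h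
      · obtain ⟨h1, h2, h3⟩ := ih.1 i l h
        rw [hr.2 n, (env_step _ _ _).1, (env_step _ _ _).2]
        exact ⟨h1, h2, by omega⟩
      · rw [hr.2 n, (env_step _ _ _).1, (env_step _ _ _).2, h]
        exact ⟨rfl, by omega, le_refl _⟩
    · intro l
      rw [hr.2 n, queue_step]
      simp only
      have hq1 : ∀ q1 : List ℕ, (q1 = ((r n).1.queue l).tail ∨ q1 = (r n).1.queue l) →
          q1.Nodup ∧ q1 ⊆ (r n).1.queue l := by
        rintro q1 (rfl | rfl)
        · exact ⟨(ih.2 l).tail, List.tail_subset _⟩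
        · exact ⟨ih.2 l, List.Subset.refl _⟩
      have hmq : (match ((r n).1.queue l).head? with
            | some i => if P i ((r n).2 i) = Act.go then ((r n).1.queue l).tail
                        else (r n).1.queue l
            | none => (r n).1.queue l) = ((r n).1.queue l).tail ∨
          (match ((r n).1.queue l).head? with
            | some i => if P i ((r n).2 i) = Act.go then ((r n).1.queue l).tail
                        else (r n).1.queue l
            | none => (r n).1.queue l) = (r n).1.queue l := by
        rcases hh : ((r n).1.queue l).head? with _ | j
        · simp
        · simp only; split <;> simp
      obtain ⟨hnd, hsub⟩ := hq1 _ hmq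
      split
      · rename_i hex
        refine List.Nodup.append hnd (List.nodup_singleton _) ?_
        intro a ha hb
        have : a = hex.choose := by simpa using hb
        subst this
        obtain ⟨l', hc⟩ := hex.choose_spec
        have := (ih.1 _ _ (hsub ha)).2.2
        rw [hc, ht] at this
        simp at this
      · exact hnd

theorem mem_lane_unique {e : EnvState kin kout} (hInv : Inv e) {i : ℕ} {l1 l2 : Fin kin}
    (h1 : i ∈ e.queue l1) (h2 : i ∈ e.queue l2) : l1 = l2 := by
  rw [← (hInv.1 i l1 h1).1, ← (hInv.1 i l2 h2).1]

theorem front_head {e : EnvState kin kout} (hInv : Inv e) {i : ℕ} {l : Fin kin}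
    (hf : isFront e i) (hm : i ∈ e.queue l) : (e.queue l).head? = some i := by
  obtain ⟨l0, h0⟩ := hf
  have hm0 : i ∈ e.queue l0 := by
    have := List.eq_cons_of_mem_head? (by rw [h0]; rfl)
    rw [this]; exact List.mem_cons_self
  rwa [mem_lane_unique hInv hm hm0]

theorem posAt_front {e : EnvState kin kout} (hInv : Inv e) {i : ℕ} {l : Fin kin}
    (h : (e.queue l).head? = some i) :
    posAt e i = some (l, 0) ∧ moveAt e i = some (l, (e.adv.arrive i).2.2) ∧
      i ∈ e.queue l := by
  have hm : i ∈ e.queue l := by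
    have := List.eq_cons_of_mem_head? (show i ∈ (e.queue l).head? by rw [h]; rfl)
    rw [this]; exact List.mem_cons_self
  have hex : ∃ l' : Fin kin, i ∈ e.queue l' := ⟨l, hm⟩
  have hch : hex.choose = l := mem_lane_unique hInv hex.choose_spec hm
  have hpos : posAt e i = some (hex.choose, (e.queue hex.choose).idxOf i) := dif_pos hex
  have hidx : (e.queue l).idxOf i = 0 := by
    have := List.eq_cons_of_mem_head? (show i ∈ (e.queue l).head? by rw [h]; rfl)
    rw [this]; exact List.idxOf_cons_self
  rw [hch] at hpos
  refine ⟨by rw [hpos, hidx], ?_, hm⟩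
  rw [moveAt, hpos, hidx]
  rfl

theorem reading_lane {e : EnvState kin kout} (hInv : Inv e) {i : ℕ} {l : Fin kin}
    (hm : i ∈ e.queue l) : (minimalReading e i).lane = LaneStatus.inLane l := by
  have hex : ∃ l' : Fin kin, i ∈ e.queue l' := ⟨l, hm⟩
  have hch : hex.choose = l := mem_lane_unique hInv hex.choose_spec hm
  simp only [minimalReading, dif_pos hex, hch]

theorem local_state_eq {C : Ctx kin kout Mem Extra Msg} {P : Prot kin kout Mem Extra}
    {r : Run kin kout Mem Extra} (hr : r ∈ Runs C P) (m : ℕ) (i : ℕ) :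
    ((r m).2 i).2.1 = minimalReading (r m).1 i ∧ ((r m).2 i).2.2 = C.iep.extra (r m).1 i := by
  cases m with
  | zero => rw [hr.1.2.2.2.2 i]; exact ⟨rfl, rfl⟩
  | succ n => rw [hr.2 n]; exact ⟨rfl, rfl⟩

theorem no_front_zero {C : Ctx kin kout Mem Extra Msg} {P : Prot kin kout Mem Extra}
    {r : Run kin kout Mem Extra} (hr : r ∈ Runs C P) (i : ℕ) : ¬ isFront (r 0).1 i := by
  rintro ⟨l, hl⟩
  rw [hr.1.2.2.1 l] at hl
  simp at hl

theorem front_go_not_mem {E : IEP kin kout Mem Extra Msg} {P : Prot kin kout Mem Extra}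
    {g : GState kin kout Mem Extra} (hInv : Inv g.1) {i : ℕ} {l : Fin kin}
    (hh : (g.1.queue l).head? = some i) (hgo : P i (g.2 i) = Act.go) :
    ∀ l', i ∉ (step E P g).1.queue l' := by
  intro l' hmem
  have hm : i ∈ g.1.queue l := by
    have := List.eq_cons_of_mem_head? (show i ∈ (g.1.queue l).head? by rw [hh]; rfl)
    rw [this]; exact List.mem_cons_self
  have htime := (hInv.1 i l hm).2.2
  rw [queue_step] at hmem
  simp only at hmem
  have hq1 : ∀ l'' : Fin kin, i ∈ (match (g.1.queue l'').head? with
        | some j => if P j (g.2 j) = Act.go then (g.1.queue l'').tail else g.1.queue l''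
        | none => g.1.queue l'') → False := by
    intro l'' hq
    by_cases he : l'' = l
    · subst he
      rw [hh] at hq
      simp only [hgo, if_pos] at hq
      have hcons := List.eq_cons_of_mem_head?
        (show i ∈ (g.1.queue l'').head? by rw [hh]; rfl)
      have hnd := hInv.2 l''
      rw [hcons] at hnd
      exact (List.nodup_cons.mp hnd).1 hq
    · have hmem' : i ∈ g.1.queue l'' := by
        rcases hh2 : (g.1.queue l'').head? with _ | j
        · rw [hh2] at hq; exact hq
        · rw [hh2] at hq
          simp only at hq
          split at hq
          · exact List.mem_of_mem_tail hq
          · exact hq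
      exact he (mem_lane_unique hInv hmem' hm)
  split at hmem
  · rename_i hex
    rcases List.mem_append.mp hmem with h | h
    · exact hq1 l' h
    · have : i = hex.choose := by simpa using h
      subst this
      obtain ⟨l'', hc⟩ := hex.choose_spec
      rw [hc] at htime
      simp at htime
  · exact hq1 l' hmem

theorem front_stay {E : IEP kin kout Mem Extra Msg} {P : Prot kin kout Mem Extra}
    {g : GState kin kout Mem Extra} {i : ℕ} {l : Fin kin}
    (hh : (g.1.queue l).head? = some i) (hgo : P i (g.2 i) ≠ Act.go) :
    ((step E P g).1.queue l).head? = some i := by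
  rw [queue_step]
  simp only [hh]
  rw [if_neg hgo]
  split
  · exact List.mem_head?_append_of_mem_head? (by rw [hh]; rfl)
  · exact hh

theorem going_iff {C : Ctx kin kout Mem Extra Msg} {P : Prot kin kout Mem Extra}
    {r : Run kin kout Mem Extra} (hr : r ∈ Runs C P) (m i : ℕ) :
    goingAt r m i ↔ isFront (r m).1 i ∧ P i ((r m).2 i) = Act.go := by
  have hInv := Inv_init hr m
  constructor
  · rintro ⟨hf, hnf⟩
    refine ⟨hf, by_contra fun hgo => hnf ?_⟩
    obtain ⟨l, hh⟩ := hf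
    refine ⟨l, ?_⟩
    rw [hr.2 m]
    exact front_stay hh hgo
  · rintro ⟨hf, hgo⟩
    refine ⟨hf, ?_⟩
    rintro ⟨l', hh'⟩
    obtain ⟨l, hh⟩ := hf
    have : i ∈ (r (m+1)).1.queue l' := by
      have := List.eq_cons_of_mem_head? (show i ∈ ((r (m+1)).1.queue l').head? by rw [hh']; rfl)
      rw [this]; exact List.mem_cons_self
    rw [hr.2 m] at this
    exact front_go_not_mem hInv hh hgo l' this

/-- The set of messages received by every front agent in round `k+1`. -/
def FrontMsgs (e : EnvState kin kout) (k : ℕ) : Set (Move kin kout) :=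
  {mv | ∃ j, (e.queue mv.1).head? = some j ∧ e.adv.Ft k j = true ∧
    mv.2 = (e.adv.arrive j).2.2}

theorem FrontMsgs_unique {e : EnvState kin kout} {k : ℕ} {l : Fin kin} {e1 e2 : Fin kout}
    (h1 : (l, e1) ∈ FrontMsgs e k) (h2 : (l, e2) ∈ FrontMsgs e k) : e1 = e2 := by
  obtain ⟨j1, hh1, _, hi1⟩ := h1
  obtain ⟨j2, hh2, _, hi2⟩ := h2
  rw [hh1] at hh2
  cases hh2
  exact hi1.trans hi2.symm

theorem memory_char {F : Set (Adversary kin kout)}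
    (hF : ∀ α ∈ F, ∀ k i, α.Fr k i = true)
    {P : Prot kin kout (Set (Move kin kout)) ℕ}
    {r : Run kin kout (Set (Move kin kout)) ℕ}
    (hr : r ∈ Runs (gammaIntent kin kout F) P) {m i : ℕ}
    (hfront : isFront (r (m+1)).1 i) :
    ((r (m+1)).2 i).1 = FrontMsgs (r (m+1)).1 m := by
  have hInv' : Inv (r (m+1)).1 := Inv_init hr (m+1)
  have hadvF : (r m).1.adv ∈ F := by rw [adv_eq hr m]; exact hr.1.1
  have htime : (r m).1.time = m := time_eq hr m
  rw [hr.2 m] at hInv' hfront ⊢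
  set s := step (gammaIntent kin kout F).iep P (r m) with hs
  obtain ⟨li, hhi⟩ := hfront
  have hposi : posAt s.1 i = some (li, 0) := (posAt_front hInv' hhi).1
  -- unfold the memory
  have hmem : (s.2 i).1 =
      (if (r m).1.adv.Fr (r m).1.time i = true ∧ (posAt s.1 i).isSome = true then
        {mv | ∃ j pj pi,
          (Eintent kin kout).msg j ((r m).2 j) (P j ((r m).2 j))
            (minimalReading s.1 j, s.1.time) = some mv ∧
          (r m).1.adv.Ft (r m).1.time j = true ∧
          posAt s.1 j = some pj ∧ posAt s.1 i = some pi ∧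
          (pj, pi) ∈ (r m).1.adv.T}
      else ∅) := rfl
  have hadv : s.1.adv = (r m).1.adv := rfl
  rw [hmem, if_pos ⟨hF _ hadvF _ _, by rw [hposi]; rfl⟩]
  ext mv
  constructor
  · rintro ⟨j, pj, pi, hmsg, hFt, hpj, hpi, hT⟩
    by_cases hfj : isFront s.1 j
    · obtain ⟨lj, hhj⟩ := hfj
      have hmemj : j ∈ s.1.queue lj := (posAt_front hInv' hhj).2.2
      have hlane := reading_lane hInv' hmemj
      simp only [Eintent, if_pos (show (minimalReading s.1 j).front from ⟨lj, hhj⟩),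
        hlane] at hmsg
      cases hmsg
      refine ⟨j, by rw [hhj], ?_, rfl⟩
      rw [htime] at hFt
      exact hFt
    · simp only [Eintent, if_neg
        (show ¬ (minimalReading s.1 j).front from hfj)] at hmsg
      cases hmsg
  · rintro ⟨j, hhj, hFt, hint⟩
    have hposj := (posAt_front hInv' hhj).1
    have hmemj : j ∈ s.1.queue mv.1 := (posAt_front hInv' hhj).2.2
    have hlane := reading_lane hInv' hmemj
    refine ⟨j, (mv.1, 0), (li, 0), ?_, by rw [htime]; exact hFt, hposj, hposi, ?_⟩
    · simp only [Eintent, if_pos (show (minimalReading s.1 j).front from ⟨mv.1, hhj⟩),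
        hlane]
      have : (minimalReading s.1 j).intent = mv.2 := by
        rw [hint]; rfl
      rw [this]
    · exact (r m).1.adv.T_front _ _

theorem Pintent_go_iff (hkin : 0 < kin) (O : Move kin kout → Move kin kout → Prop)
    {i : ℕ} {s : LState kin kout (Set (Move kin kout)) ℕ} {l : Fin kin}
    (hl : s.2.1.lane = LaneStatus.inLane l) :
    Pintent hkin O i s = Act.go ↔
      s.2.1.front ∧ compatAll O (PosSet hkin O s.1 (nextL hkin s.2.2) l) (l, s.2.1.intent) := by
  simp only [Pintent, hl]
  constructor
  · intro h
    by_contra hc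
    rw [if_neg hc] at h
    cases h
  · intro h
    rw [if_pos h]

end Runs

theorem Reading.ext' {a b : Reading kin kout} (h1 : a.front ↔ b.front)
    (h2 : a.lane = b.lane) (h3 : a.intent = b.intent) : a = b := by
  cases a; cases b
  cases propext h1; cases h2; cases h3
  rfl

section Construction

variable (M : Set (Move kin kout)) (l : Fin kin) (ι : Fin kout) (mv' : Move kin kout)

/-- The participating lanes of the constructed adversary, with their intents. -/
def pL : Fin kin → Option (Fin kout) := fun l'' =>
  if l'' = l then some ι
  else if l'' = mv'.1 then some mv'.2
  else if h : ∃ e, (l'', e) ∈ M then some h.choose else none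

variable (m i : ℕ)

/-- The designated agent of each lane. -/
def theA : Fin kin → ℕ := fun l'' => if l'' = l then i else i + 1 + l''.val

/-- The arrival schedule of the constructed adversary. -/
def arr : ℕ → ℕ × Fin kin × Fin kout := fun a =>
  if a = i then (m, l, ι)
  else if h : ∃ l'' : Fin kin, i + 1 + l''.val = a ∧ l'' ≠ l ∧
      (pL M l ι mv' l'').isSome = true then
    (m, h.choose, (pL M l ι mv' h.choose).get h.choose_spec.2.2)
  else (m + 1 + a, l, ι)

theorem pL_l : pL M l ι mv' l = some ι := if_pos rfl

theorem arr_i : arr M l ι mv' m i i = (m, l, ι) := if_pos rfl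

theorem arr_agent {l'' : Fin kin} (hne : l'' ≠ l)
    (hS : (pL M l ι mv' l'').isSome = true) :
    arr M l ι mv' m i (i + 1 + l''.val) = (m, l'', (pL M l ι mv' l'').get hS) := by
  have hni : i + 1 + l''.val ≠ i := by omega
  have hex : ∃ l0 : Fin kin, i + 1 + l0.val = i + 1 + l''.val ∧ l0 ≠ l ∧
      (pL M l ι mv' l0).isSome = true := ⟨l'', rfl, hne, hS⟩
  have hch : hex.choose = l'' := by
    have := hex.choose_spec.1
    exact Fin.ext (by omega)
  rw [arr, if_neg hni, dif_pos hex]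
  have hsome : some ((pL M l ι mv' hex.choose).get hex.choose_spec.2.2) =
      some ((pL M l ι mv' l'').get hS) := by
    rw [Option.some_get, Option.some_get, hch]
  simp only [Prod.mk.injEq]
  exact ⟨trivial, hch, Option.some_injective _ hsome⟩

theorem arr_theA {l'' : Fin kin} (hS : (pL M l ι mv' l'').isSome = true) :
    arr M l ι mv' m i (theA l i l'') = (m, l'', (pL M l ι mv' l'').get hS) := by
  by_cases he : l'' = l
  · subst he
    rw [theA, if_pos rfl, arr_i]
    have : (pL M l'' ι mv' l'').get hS = ι := by
      simp [pL_l]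
    rw [this]
  · rw [theA, if_neg he]
    exact arr_agent M l ι mv' m i he hS

theorem arr_inv {a : ℕ} {l'' : Fin kin} {x : Fin kout}
    (h : arr M l ι mv' m i a = (m, l'', x)) :
    (a = i ∧ l'' = l ∧ x = ι) ∨
    (a = i + 1 + l''.val ∧ l'' ≠ l ∧ pL M l ι mv' l'' = some x) := by
  rw [arr] at h
  split at h
  · rename_i ha
    simp only [Prod.mk.injEq] at h
    obtain ⟨-, h2, h3⟩ := h
    exact Or.inl ⟨ha, h2.symm, h3.symm⟩
  · split at h
    · rename_i hni hex
      simp only [Prod.mk.injEq] at h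
      obtain ⟨-, h2, h3⟩ := h
      right
      have hsp := hex.choose_spec
      have hpls : pL M l ι mv' hex.choose = some x := by
        rw [← h3]
        exact (Option.some_get _).symm
      rw [h2] at hpls
      refine ⟨?_, h2 ▸ hsp.2.1, hpls⟩
      have := hsp.1
      rw [h2] at this
      omega
    · exfalso
      simp only [Prod.mk.injEq] at h
      omega

theorem arr_time {a : ℕ} : (arr M l ι mv' m i a).1 = m ∨
    (arr M l ι mv' m i a).1 = m + 1 + a := by
  rw [arr]
  split
  · exact Or.inl rfl
  · split
    · exact Or.inl rfl
    · exact Or.inr rfl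

theorem arr_cf : ∀ a b : ℕ, a ≠ b → (arr M l ι mv' m i a).1 = (arr M l ι mv' m i b).1 →
    (arr M l ι mv' m i a).2.1 ≠ (arr M l ι mv' m i b).2.1 := by
  intro a b hab htime hlane
  rcases arr_time M l ι mv' m i (a := a) with ha | ha <;>
    rcases arr_time M l ι mv' m i (a := b) with hb | hb
  · -- both arrive at time m
    have hae : arr M l ι mv' m i a = (m, (arr M l ι mv' m i a).2.1, (arr M l ι mv' m i a).2.2) := by
      exact Prod.ext_iff.mpr ⟨ha, rfl⟩
    have hbe : arr M l ι mv' m i b = (m, (arr M l ι mv' m i b).2.1, (arr M l ι mv' m i b).2.2) := by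
      exact Prod.ext_iff.mpr ⟨hb, rfl⟩
    
    rw [← hlane] at hbe
    rcases arr_inv M l ι mv' m i hae with ⟨ha1, ha2, -⟩ | ⟨ha1, ha2, -⟩ <;>
      rcases arr_inv M l ι mv' m i hbe with ⟨hb1, hb2, -⟩ | ⟨hb1, hb2, -⟩
    · exact hab (ha1.trans hb1.symm)
    · exact hb2 ha2
    · exact ha2 hb2
    · exact hab (ha1.trans hb1.symm)
  · omega
  · omega
  · omega

end Construction

theorem moveAt_inv {e : EnvState kin kout} {j : ℕ} {mj : Move kin kout}
    (h : moveAt e j = some mj) : j ∈ e.queue mj.1 ∧ mj.2 = (e.adv.arrive j).2.2 := by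
  by_cases hq : ∃ l', j ∈ e.queue l'
  · rw [moveAt, posAt, dif_pos hq, Option.map_some] at h
    injection h with h'
    cases h'
    exact ⟨hq.choose_spec, rfl⟩
  · rw [moveAt, posAt, dif_neg hq] at h
    cases h

theorem reading_lane_inv {e : EnvState kin kout} {i : ℕ} {l : Fin kin}
    (h : (minimalReading e i).lane = LaneStatus.inLane l) : i ∈ e.queue l := by
  by_cases hq : ∃ l', i ∈ e.queue l'
  · simp only [minimalReading, dif_pos hq] at h
    injection h with h'
    exact h' ▸ hq.choose_spec
  · simp only [minimalReading, dif_neg hq] at h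
    split at h <;> cases h

theorem sound (hkin : 0 < kin) (O : Move kin kout → Move kin kout → Prop)
    {F : Set (Adversary kin kout)} (hFr : ∀ α ∈ F, ∀ k a, α.Fr k a = true)
    {r : Run kin kout (Set (Move kin kout)) ℕ}
    (hr : r ∈ Runs (gammaIntent kin kout F) (Pintent hkin O)) (m i : ℕ)
    (hgo : Pintent hkin O i ((r m).2 i) = Act.go) :
    phiP O (fun _ => (∅ : Set (Move kin kout))) (fun h => nextL hkin h.length) i r m := by
  have hread := (local_state_eq hr m i).1
  have hext : ((r m).2 i).2.2 = m := (local_state_eq hr m i).2.trans (time_eq hr m)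
  have hInv := Inv_init hr m
  cases hlane : ((r m).2 i).2.1.lane with
  | notArrived => simp only [Pintent, hlane] at hgo; exact Act.noConfusion hgo
  | finished => simp only [Pintent, hlane] at hgo; exact Act.noConfusion hgo
  | inLane l =>
    obtain ⟨hfrontP, hcompat⟩ := (Pintent_go_iff hkin O hlane).mp hgo
    have hfront : isFront (r m).1 i := by rw [hread] at hfrontP; exact hfrontP
    have hmem_i : i ∈ (r m).1.queue l := reading_lane_inv (by rw [← hread]; exact hlane)
    have hhead := front_head hInv hfront hmem_i
    have hpos := posAt_front hInv hhead
    obtain ⟨n0, rfl⟩ : ∃ n0, m = n0 + 1 := by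
      cases m with
      | zero => exact absurd hfront (no_front_zero hr i)
      | succ n => exact ⟨n, rfl⟩
    have hM : ((r (n0+1)).2 i).1 = FrontMsgs (r (n0+1)).1 n0 := memory_char hFr hr hfront
    have hι : ((r (n0+1)).2 i).2.1.intent = ((r (n0+1)).1.adv.arrive i).2.2 := by
      rw [hread]; rfl
    rw [hM, hext, hι] at hcompat
    refine ⟨hfront, Or.inr ⟨(l, ((r (n0+1)).1.adv.arrive i).2.2), hpos.2.1,
      Set.notMem_empty _, fun _ _ _ _ h => absurd h (Set.notMem_empty _), ?_⟩⟩
    intro j mj hji hgoing hmovej _ hcyc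
    simp only [histOf, hist_length] at hcyc
    obtain ⟨hfj, hgoj⟩ := (going_iff hr (n0+1) j).mp hgoing
    obtain ⟨hmemj, hintj⟩ := moveAt_inv hmovej
    have hheadj : ((r (n0+1)).1.queue mj.1).head? = some j := front_head hInv hfj hmemj
    have hreadj := (local_state_eq hr (n0+1) j).1
    have hlanej : ((r (n0+1)).2 j).2.1.lane = LaneStatus.inLane mj.1 := by
      rw [hreadj]; exact reading_lane hInv hmemj
    obtain ⟨-, hcompatj⟩ := (Pintent_go_iff hkin O hlanej).mp hgoj
    have hMj : ((r (n0+1)).2 j).1 = FrontMsgs (r (n0+1)).1 n0 := memory_char hFr hr hfj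
    have hextj : ((r (n0+1)).2 j).2.2 = n0+1 :=
      (local_state_eq hr _ j).2.trans (time_eq hr _)
    have hintj' : ((r (n0+1)).2 j).2.1.intent = mj.2 := by
      rw [hreadj]; exact hintj.symm
    rw [hMj, hextj, hintj'] at hcompatj
    have hmj_mem : mj ∈ posStage hkin O (FrontMsgs (r (n0+1)).1 n0) (nextL hkin (n0+1))
        (distC (nextL hkin (n0+1)) mj.1 + 1) := by
      refine posStage_insert hkin O _ _ (lane_at_distC _ mj.1).symm hcompatj ?_
      rintro ⟨e, he⟩
      obtain ⟨a, hh, hFt, hint⟩ := he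
      rw [hheadj] at hh
      injection hh with hh
      subst hh
      have he2 : e = mj.2 := hint.trans hintj.symm
      have : ((mj.1, e) : Move kin kout) ∈ FrontMsgs (r (n0+1)).1 n0 :=
        ⟨j, hheadj, hFt, hint⟩
      rw [he2] at this
      exact this
    have hle : distC (nextL hkin (n0+1)) mj.1 + 1 ≤ distC (nextL hkin (n0+1)) l :=
      Nat.succ_le_of_lt hcyc
    exact hcompat mj (posStage_mono hkin O _ _ hle hmj_mem)

theorem construction (hkin : 0 < kin) (O : Move kin kout → Move kin kout → Prop)
    {F : Set (Adversary kin kout)}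
    (hFr : ∀ α ∈ F, ∀ k a, α.Fr k a = true)
    (hFin : ∀ α : Adversary kin kout, (∀ k a, α.Fr k a = true) →
      (∀ k k' a, α.Ft k a = α.Ft k' a) → α ∈ F)
    (M : Set (Move kin kout)) (l : Fin kin) (ι : Fin kout) (mv' : Move kin kout)
    {n0 i : ℕ}
    (hMl : ∀ e : Fin kout, (l, e) ∈ M → e = ι)
    (hMuniq : ∀ (l'' : Fin kin) (e1 e2 : Fin kout),
      (l'', e1) ∈ M → (l'', e2) ∈ M → e1 = e2)
    (hMmv : (∃ e, (mv'.1, e) ∈ M) → mv' ∈ M)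
    (hne : mv'.1 ≠ l) :
    ∃ r' ∈ Runs (gammaIntent kin kout F) (Pintent hkin O), ∃ j : ℕ,
      j ≠ i ∧
      ((r' (n0+1)).1.queue l).head? = some i ∧
      ((r' (n0+1)).1.queue mv'.1).head? = some j ∧
      ((r' (n0+1)).2 i).1 = M ∧ ((r' (n0+1)).2 j).1 = M ∧
      ((r' (n0+1)).1.adv.arrive i).2.2 = ι ∧
      ((r' (n0+1)).1.adv.arrive j).2.2 = mv'.2 := by
  set m := n0 + 1 with hm
  set α' : Adversary kin kout :=
    { arrive := arr M l ι mv' m i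
      conflictFree := arr_cf M l ι mv' m i
      T := Set.univ
      T_front := fun _ _ => Set.mem_univ _
      Ft := fun _ a => decide ((arr M l ι mv' m i a).1 = m ∧
        ((arr M l ι mv' m i a).2.1, (arr M l ι mv' m i a).2.2) ∈ M)
      Fr := fun _ _ => true } with hα'
  set e0 : EnvState kin kout := ⟨α', 0, fun _ => [], ∅⟩ with he0
  set g0 : GState kin kout (Set (Move kin kout)) ℕ :=
    (e0, fun a => (∅, minimalReading e0 a, 0)) with hg0
  set r' : Run kin kout (Set (Move kin kout)) ℕ :=
    (fun n => (step (gammaIntent kin kout F).iep (Pintent hkin O))^[n] g0) with hr'def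
  have hrs : ∀ n, r' (n+1) = step (gammaIntent kin kout F).iep (Pintent hkin O) (r' n) :=
    fun n => Function.iterate_succ_apply' _ n g0
  have hαF : α' ∈ F := hFin α' (fun _ _ => rfl) (fun _ _ _ => rfl)
  have hrRuns : r' ∈ Runs (gammaIntent kin kout F) (Pintent hkin O) :=
    ⟨⟨hαF, rfl, fun _ => rfl, rfl, fun _ => rfl⟩, hrs⟩
  have hadvm : ∀ n, (r' n).1.adv = α' := fun n => adv_eq hrRuns n
  have hα'arr : α'.arrive = arr M l ι mv' m i := rfl
  have htimem : ∀ n, (r' n).1.time = n := fun n => time_eq hrRuns n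
  -- queues are empty before time m
  have hempty : ∀ n, n < m → ∀ l'' : Fin kin, (r' n).1.queue l'' = [] := by
    intro n
    induction n with
    | zero => intro _ _; rfl
    | succ k ih =>
      intro hlt l''
      rw [hrs k, queue_step]
      have hq : (r' k).1.queue l'' = [] := ih (by omega) l''
      have hnoarr : ¬ ∃ a l2, (r' k).1.adv.arrive a = ((r' k).1.time + 1, l'', l2) := by
        rintro ⟨a, l2, harr⟩
        rw [hadvm k, htimem k] at harr
        have h1 := congrArg Prod.fst harr
        simp only at h1
        rw [hα'arr] at h1
        rcases arr_time M l ι mv' m i (a := a) with h | h <;> omega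
      simp only [hq, List.head?_nil, dif_neg hnoarr]
  -- queues at time m
  have hqm : ∀ l'' : Fin kin, ∀ hS : (pL M l ι mv' l'').isSome = true,
      (r' m).1.queue l'' = [theA l i l''] := by
    intro l'' hS
    rw [hm, hrs n0, queue_step]
    have hq : (r' n0).1.queue l'' = [] := hempty n0 (by omega) l''
    have hex : ∃ a l2, (r' n0).1.adv.arrive a = ((r' n0).1.time + 1, l'', l2) := by
      rw [hadvm n0, htimem n0]
      exact ⟨theA l i l'', (pL M l ι mv' l'').get hS, arr_theA M l ι mv' m i hS⟩
    simp only [hq, List.head?_nil, dif_pos hex, List.nil_append]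
    have hch : hex.choose = theA l i l'' := by
      have hcsp := hex.choose_spec
      generalize hgen : hex.choose = c at hcsp ⊢
      obtain ⟨l2, hsp⟩ := hcsp
      rw [hadvm n0, htimem n0] at hsp
      by_contra hcn
      have hthA := arr_theA M l ι mv' m i hS
      have := arr_cf M l ι mv' m i c (theA l i l'') hcn
        (by rw [show α'.arrive c = arr M l ι mv' m i c from rfl] at hsp
            rw [hsp, hthA])
      rw [show α'.arrive c = arr M l ι mv' m i c from rfl] at hsp
      rw [hsp, hthA] at this
      exact this rfl
    rw [hch]
  have hqnone : ∀ l'' : Fin kin, ¬ ((pL M l ι mv' l'').isSome = true) →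
      (r' m).1.queue l'' = [] := by
    intro l'' hS
    rw [hm, hrs n0, queue_step]
    have hq : (r' n0).1.queue l'' = [] := hempty n0 (by omega) l''
    have hnoarr : ¬ ∃ a l2, (r' n0).1.adv.arrive a = ((r' n0).1.time + 1, l'', l2) := by
      rintro ⟨a, l2, harr⟩
      rw [hadvm n0, htimem n0] at harr
      rcases arr_inv M l ι mv' m i harr with ⟨-, h2, -⟩ | ⟨-, -, h3⟩
      · subst h2
        rw [pL_l] at hS
        exact hS rfl
      · rw [h3] at hS
        exact hS rfl
    simp only [hq, List.head?_nil, dif_neg hnoarr]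
  -- the two key lanes
  have hpLl : (pL M l ι mv' l).isSome = true := by rw [pL_l]; rfl
  have hpLmv : pL M l ι mv' mv'.1 = some mv'.2 := by rw [pL, if_neg hne, if_pos rfl]
  have hpLmvS : (pL M l ι mv' mv'.1).isSome = true := by rw [hpLmv]; rfl
  have hql : (r' m).1.queue l = [i] := by
    have := hqm l hpLl
    rwa [theA, if_pos rfl] at this
  have hqmv : (r' m).1.queue mv'.1 = [i + 1 + mv'.1.val] := by
    have := hqm mv'.1 hpLmvS
    rwa [theA, if_neg hne] at this
  have hheadi : ((r' m).1.queue l).head? = some i := by rw [hql]; rfl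
  have hheadj : ((r' m).1.queue mv'.1).head? = some (i + 1 + mv'.1.val) := by
    rw [hqmv]; rfl
  have harri : α'.arrive i = (m, l, ι) := arr_i M l ι mv' m i
  have harrj : α'.arrive (i + 1 + mv'.1.val) = (m, mv'.1, mv'.2) := by
    show arr M l ι mv' m i (i + 1 + mv'.1.val) = (m, mv'.1, mv'.2)
    rw [arr_agent M l ι mv' m i hne hpLmvS]
    have : (pL M l ι mv' mv'.1).get hpLmvS = mv'.2 := by
      simp [hpLmv]
    rw [this]
  -- the memories at time m equal M
  have hFM : FrontMsgs (r' m).1 n0 = M := by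
    ext mv
    constructor
    · rintro ⟨a, hh, hFt, hint⟩
      by_cases hS : (pL M l ι mv' mv.1).isSome = true
      · rw [hqm mv.1 hS] at hh
        injection hh with hh
        subst hh
        rw [hadvm m] at hFt hint
        rw [hα'arr] at hint
        have harr := arr_theA M l ι mv' m i hS
        have hFt' : (arr M l ι mv' m i (theA l i mv.1)).1 = m ∧
            ((arr M l ι mv' m i (theA l i mv.1)).2.1,
             (arr M l ι mv' m i (theA l i mv.1)).2.2) ∈ M := of_decide_eq_true hFt
        rw [harr] at hFt' hint
        have : mv = (mv.1, (pL M l ι mv' mv.1).get hS) := Prod.ext_iff.mpr ⟨rfl, hint⟩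
        rw [this]
        exact hFt'.2
      · rw [hqnone mv.1 hS] at hh
        cases hh
    · intro hmv
      by_cases h1 : mv.1 = l
      · have hmvl : ((l, mv.2) : Move kin kout) ∈ M := by rw [← h1]; exact hmv
        have h2 : mv.2 = ι := hMl mv.2 hmvl
        refine ⟨i, by rw [h1]; exact hheadi, ?_, ?_⟩
        · rw [hadvm m]
          apply decide_eq_true
          rw [← hα'arr, harri]
          refine ⟨rfl, ?_⟩
          rw [← h2, ← h1]
          exact hmv
        · rw [hadvm m, harri, h2]
      · by_cases h2 : mv.1 = mv'.1
        · have hmvM : mv' ∈ M := hMmv ⟨mv.2, by rw [← h2]; exact hmv⟩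
          have h3 : mv.2 = mv'.2 := by
            refine hMuniq mv'.1 mv.2 mv'.2 (by rw [← h2]; exact hmv) ?_
            exact hmvM
          refine ⟨i + 1 + mv'.1.val, by rw [h2]; exact hheadj, ?_, ?_⟩
          · rw [hadvm m]
            apply decide_eq_true
            rw [← hα'arr, harrj]
            exact ⟨rfl, hmvM⟩
          · rw [hadvm m, harrj, h3]
        · have hexM : ∃ e, ((mv.1, e) : Move kin kout) ∈ M := ⟨mv.2, hmv⟩
          have hpLe : pL M l ι mv' mv.1 = some hexM.choose := by
            rw [pL, if_neg h1, if_neg h2, dif_pos hexM]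
          have hpLeS : (pL M l ι mv' mv.1).isSome = true := by rw [hpLe]; rfl
          have hchv : hexM.choose = mv.2 := hMuniq mv.1 _ _ hexM.choose_spec hmv
          have hget : (pL M l ι mv' mv.1).get hpLeS = mv.2 := by
            simp [hpLe, hchv]
          have harrv := arr_theA M l ι mv' m i hpLeS
          rw [hget] at harrv
          have hthA : theA l i mv.1 = i + 1 + mv.1.val := by rw [theA, if_neg h1]
          refine ⟨theA l i mv.1, by rw [hqm mv.1 hpLeS]; rfl, ?_, ?_⟩
          · rw [hadvm m]
            apply decide_eq_true
            rw [harrv]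
            exact ⟨rfl, hmv⟩
          · rw [hadvm m, hα'arr, harrv]
  have hfronti : isFront (r' m).1 i := ⟨l, hheadi⟩
  have hfrontj : isFront (r' m).1 (i + 1 + mv'.1.val) := ⟨mv'.1, hheadj⟩
  refine ⟨r', hrRuns, i + 1 + mv'.1.val, by omega, hheadi, hheadj, ?_, ?_, ?_, ?_⟩
  · exact (memory_char hFr hrRuns hfronti).trans hFM
  · exact (memory_char hFr hrRuns hfrontj).trans hFM
  · rw [hadvm m, harri]
  · rw [hadvm m, harrj]

end Aux

end Inter

open Inter

/-- `P^intent` implements the knowledge-based program `𝐏` (instantiated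
with `next(h) = |h| mod |L_in|` and `σ(h) = ∅`) with respect to `γ_intent(F)` for each
`F ∈ {CR, SO}`. -/
theorem Pintent_implements_kbp
    {kin kout : ℕ} (hkin : 0 < kin)
    (O : Move kin kout → Move kin kout → Prop)
    (hO : ∀ a b, O a b → O b a) :
    ∀ F ∈ ({CRadv kin kout, SOadv kin kout} : Set (Set (Adversary kin kout))),
      Implements (gammaIntent kin kout F) (Pintent hkin O)
        (phiP O (fun _ => (∅ : Set (Move kin kout))) (fun h => nextL hkin h.length)) := by
  intro F hF'
  simp only [Set.mem_insert_iff, Set.mem_singleton_iff] at hF'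
  have hFr : ∀ α ∈ F, ∀ k a, α.Fr k a = true := by
    rcases hF' with rfl | rfl
    · exact fun α hα k a => hα.1 k a
    · exact fun α hα k a => hα k a
  have hFin : ∀ α : Adversary kin kout, (∀ k a, α.Fr k a = true) →
      (∀ k k' a, α.Ft k a = α.Ft k' a) → α ∈ F := by
    rcases hF' with rfl | rfl
    · exact fun α h1 h2 => ⟨h1, fun k a hfalse k' _ => (h2 k' k a).trans hfalse⟩
    · exact fun α h1 _ => h1
  intro r hr m i
  constructor
  · intro hgo r' hr' m' hsteq
    apply Aux.sound hkin O hFr hr' m' i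
    rw [hsteq]; exact hgo
  · intro hK
    have hφ := hK r hr m rfl
    have hfront0 : isFront (r m).1 i := hφ.1
    obtain ⟨n0, rfl⟩ : ∃ n0, m = n0 + 1 := by
      cases m with
      | zero => exact absurd hfront0 (Aux.no_front_zero hr i)
      | succ n => exact ⟨n, rfl⟩
    have hInv := Aux.Inv_init hr (n0+1)
    have hread := (Aux.local_state_eq hr (n0+1) i).1
    have hext : ((r (n0+1)).2 i).2.2 = n0+1 :=
      (Aux.local_state_eq hr _ i).2.trans (Aux.time_eq hr _)
    obtain ⟨l, hhead⟩ := hfront0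
    have hfront : isFront (r (n0+1)).1 i := ⟨l, hhead⟩
    have hmem_i : i ∈ (r (n0+1)).1.queue l := (Aux.posAt_front hInv hhead).2.2
    have hlane : ((r (n0+1)).2 i).2.1.lane = LaneStatus.inLane l := by
      rw [hread]; exact Aux.reading_lane hInv hmem_i
    have hfrontP : ((r (n0+1)).2 i).2.1.front := by rw [hread]; exact hfront
    by_cases hc : compatAll O (PosSet hkin O ((r (n0+1)).2 i).1
        (nextL hkin ((r (n0+1)).2 i).2.2) l) (l, ((r (n0+1)).2 i).2.1.intent)
    · exact (Aux.Pintent_go_iff hkin O hlane).mpr ⟨hfrontP, hc⟩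
    · exfalso
      rw [hext] at hc
      have hιeq : ((r (n0+1)).2 i).2.1.intent = ((r (n0+1)).1.adv.arrive i).2.2 := by
        rw [hread]; rfl
      rw [hιeq] at hc
      unfold compatAll at hc
      push_neg at hc
      obtain ⟨mv', hmv'S, hnO⟩ := hc
      have hMchar : ((r (n0+1)).2 i).1 = Aux.FrontMsgs (r (n0+1)).1 n0 :=
        Aux.memory_char hFr hr hfront
      obtain ⟨t', ht'lt, hlaneval, hcompat', hMimp⟩ :=
        Aux.posStage_elem hkin O ((r (n0+1)).2 i).1 (nextL hkin (n0+1)) hmv'S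
      have ht'kin : t' < kin := Nat.lt_trans ht'lt (Aux.distC_lt hkin _ l)
      have ht' : distC (nextL hkin (n0+1)) mv'.1 = t' := by
        rw [show mv'.1 = (⟨((nextL hkin (n0+1)).val + t') % kin, Nat.mod_lt _ hkin⟩ :
          Fin kin) from Fin.ext hlaneval]
        exact Aux.distC_lane_at _ _ ht'kin hkin
      have hne : mv'.1 ≠ l := by
        intro he
        rw [he] at ht'
        omega
      have hMl : ∀ e : Fin kout, ((l, e) : Move kin kout) ∈ ((r (n0+1)).2 i).1 →
          e = ((r (n0+1)).1.adv.arrive i).2.2 := by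
        intro e he
        rw [hMchar] at he
        obtain ⟨a, hh, -, hint⟩ := he
        rw [hhead] at hh
        injection hh with hh
        subst hh
        exact hint
      have hMuniq : ∀ (l'' : Fin kin) (e1 e2 : Fin kout),
          (l'', e1) ∈ ((r (n0+1)).2 i).1 → (l'', e2) ∈ ((r (n0+1)).2 i).1 → e1 = e2 := by
        intro l'' e1 e2 h1 h2
        rw [hMchar] at h1 h2
        exact Aux.FrontMsgs_unique h1 h2
      obtain ⟨r', hrRuns, j, hji, hheadi', hheadj', hMi', hMj', hinti', hintj'⟩ :=
        Aux.construction hkin O hFr hFin ((r (n0+1)).2 i).1 l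
          ((r (n0+1)).1.adv.arrive i).2.2 mv' (n0 := n0) (i := i) hMl hMuniq hMimp hne
      have hInv' := Aux.Inv_init hrRuns (n0+1)
      have hread' := (Aux.local_state_eq hrRuns (n0+1) i).1
      have hext' : ((r' (n0+1)).2 i).2.2 = n0+1 :=
        (Aux.local_state_eq hrRuns _ i).2.trans (Aux.time_eq hrRuns _)
      have hmem_i' : i ∈ (r' (n0+1)).1.queue l := (Aux.posAt_front hInv' hheadi').2.2
      have hfront' : isFront (r' (n0+1)).1 i := ⟨l, hheadi'⟩
      have hreadeq : ((r' (n0+1)).2 i).2.1 = ((r (n0+1)).2 i).2.1 := by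
        rw [hread, hread']
        refine Aux.Reading.ext' ⟨fun _ => hfront, fun _ => hfront'⟩ ?_ ?_
        · rw [Aux.reading_lane hInv' hmem_i', Aux.reading_lane hInv hmem_i]
        · show ((r' (n0+1)).1.adv.arrive i).2.2 = ((r (n0+1)).1.adv.arrive i).2.2
          rw [hinti']
      have hstateq : (r' (n0+1)).2 i = (r (n0+1)).2 i :=
        Prod.ext_iff.mpr ⟨hMi', Prod.ext_iff.mpr ⟨hreadeq, hext'.trans hext.symm⟩⟩
      obtain ⟨hfront'', hor⟩ := hK r' hrRuns (n0+1) hstateq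
      rcases hor with ⟨mv0, -, h0⟩ | hV
      · exact absurd h0 (Set.notMem_empty _)
      obtain ⟨mva, hmova, -, -, h4⟩ := hV
      have hmovai : moveAt (r' (n0+1)).1 i =
          some (l, ((r' (n0+1)).1.adv.arrive i).2.2) :=
        (Aux.posAt_front hInv' hheadi').2.1
      rw [hmovai] at hmova
      injection hmova with hmova
      have hmem_j : j ∈ (r' (n0+1)).1.queue mv'.1 := (Aux.posAt_front hInv' hheadj').2.2
      have hfrontj : isFront (r' (n0+1)).1 j := ⟨mv'.1, hheadj'⟩
      have hreadj' := (Aux.local_state_eq hrRuns (n0+1) j).1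
      have hlanej : ((r' (n0+1)).2 j).2.1.lane = LaneStatus.inLane mv'.1 := by
        rw [hreadj']; exact Aux.reading_lane hInv' hmem_j
      have hextj' : ((r' (n0+1)).2 j).2.2 = n0+1 :=
        (Aux.local_state_eq hrRuns _ j).2.trans (Aux.time_eq hrRuns _)
      have hintjr : ((r' (n0+1)).2 j).2.1.intent = mv'.2 := by
        rw [hreadj']
        show ((r' (n0+1)).1.adv.arrive j).2.2 = mv'.2
        exact hintj'
      have hgoj : Pintent hkin O j ((r' (n0+1)).2 j) = Act.go := by
        refine (Aux.Pintent_go_iff hkin O hlanej).mpr ⟨?_, ?_⟩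
        · rw [hreadj']; exact hfrontj
        · rw [hMj', hextj', hintjr]
          show compatAll O (posStage hkin O ((r (n0+1)).2 i).1 (nextL hkin (n0+1))
            (distC (nextL hkin (n0+1)) mv'.1)) (mv'.1, mv'.2)
          rw [ht']
          exact hcompat'
      have hgoingj : goingAt r' (n0+1) j := (Aux.going_iff hrRuns _ j).mpr ⟨hfrontj, hgoj⟩
      have hmovej : moveAt (r' (n0+1)).1 j = some mv' := by
        rw [(Aux.posAt_front hInv' hheadj').2.1, hintj']
      have hOres := h4 j mv' hji hgoingj hmovej (Set.notMem_empty _)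
        (by
          show inCyc (nextL hkin (histOf r' (n0+1)).length) mva.1 mv'.1
          have hlen : (histOf r' (n0+1)).length = n0+1 := Aux.hist_length _ _
          rw [hlen, ← hmova]
          show distC (nextL hkin (n0+1)) mv'.1 < distC (nextL hkin (n0+1)) l
          rw [ht']
          exact ht'lt)
      rw [← hmova] at hOres
      rw [hinti'] at hOres
      exact hnO hOres
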